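/- Let k ≥ 2 and let (λ₁,…,λ_k) be a dominant integral gl(k,ℂ)-weight with λ₁ ≥ 2 and λ_k > 0. Then for every positive integer ℓ, the maximal weight multiplicity of the simple finite-dimensional gl(k+ℓ,ℂ)-module with highest weight (λ₁,…,λ_k,0^{(ℓ)}) satisfies d((λ₁,…,λ_k,0^{(ℓ)})) ≥ min{λ₁, ℓ}. -/

import Mathlib

set_option maxHeartbeats 1000000
set_option synthInstance.maxHeartbeats 100000

noncomputable section

attribute [local instance 100] LieRing.ofAssociativeRing

/-- The Lie algebra `gl(m, ℂ)` of `m × m` complex matrices. -/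
abbrev glMat (m : ℕ) : Type := Matrix (Fin m) (Fin m) ℂ

section GlWeights

variable (m : ℕ) (M : Type) [AddCommGroup M] [Module ℂ M]
  [LieRingModule (glMat m) M] [LieModule ℂ (glMat m) M]

/-- The weight space of a `gl(m,ℂ)`-module attached to `lam : Fin m → ℂ` (the diagonal
Cartan subalgebra acting via `diagonal d ↦ ∑ᵢ d i * lam i`). -/
def glWtSp (lam : Fin m → ℂ) : Submodule ℂ M where
  carrier := {v | ∀ d : Fin m → ℂ,
    ⁅(Matrix.diagonal d : glMat m), v⁆ = (∑ i, d i * lam i) • v}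
  zero_mem' := by intro d; simp
  add_mem' := by intro a b ha hb d; rw [lie_add, ha d, hb d, smul_add]
  smul_mem' := by intro c a ha d; rw [lie_smul, ha d, smul_comm]

/-- `v` is a highest weight vector of weight `lam` with respect to the Borel subalgebra of
upper-triangular matrices. -/
def IsHWVector (lam : Fin m → ℂ) (v : M) : Prop :=
  v ∈ glWtSp m M lam ∧
  ∀ i j : Fin m, i < j → ⁅(Matrix.single i j (1 : ℂ) : glMat m), v⁆ = 0

/-- `M` is a simple finite-dimensional `gl(m,ℂ)`-module of highest weight `lam`
(with respect to the upper-triangular Borel subalgebra), i.e. `M ≅ L(lam)`. -/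
def IsSimpleFDHW (lam : Fin m → ℂ) : Prop :=
  LieModule.IsIrreducible ℂ (glMat m) M ∧ FiniteDimensional ℂ M ∧
  ∃ v : M, v ≠ 0 ∧ IsHWVector m M lam v

/-- The maximal weight multiplicity (`deg`) of a `gl(m,ℂ)`-module. -/
def maxMult : ℕ :=
  sSup {d : ℕ | ∃ lam : Fin m → ℂ, d = Module.finrank ℂ (glWtSp m M lam)}

end GlWeights

namespace DegAux

/-- standard basis matrix -/
def EB {m : ℕ} (i j : Fin m) : glMat m := Matrix.single i j 1

variable {m : ℕ}

lemma lie_EB_EB {i j p q : Fin m} (hjp : j ≠ p) (hqi : q ≠ i) :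
    ⁅EB i j, EB p q⁆ = 0 := by
  rw [Ring.lie_def, EB, EB, Matrix.single_mul_single_of_ne (i := i) (j := j) (h := hjp) (d := 1),
    Matrix.single_mul_single_of_ne (i := p) (j := q) (h := hqi) (d := 1), sub_zero]

lemma lie_EB_left {i j q : Fin m} (hqi : q ≠ i) : ⁅EB i j, EB j q⁆ = EB i q := by
  rw [Ring.lie_def, EB, EB, EB, Matrix.single_mul_single_same (i := i) (j := j) (k := q) (d := 1),
    Matrix.single_mul_single_of_ne (i := j) (j := q) (h := hqi) (d := 1), sub_zero, one_mul]

lemma lie_EB_right {i j p : Fin m} (hjp : j ≠ p) : ⁅EB i j, EB p i⁆ = -(EB p j) := by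
  rw [Ring.lie_def, EB, EB, EB, Matrix.single_mul_single_of_ne (i := i) (j := j) (h := hjp) (d := 1),
    Matrix.single_mul_single_same (i := p) (j := i) (k := j) (d := 1), zero_sub, one_mul]

lemma lie_EB_same {i j : Fin m} : ⁅EB i j, EB j i⁆ = EB i i - EB j j := by
  rw [Ring.lie_def, EB, EB, EB, EB, Matrix.single_mul_single_same (i := i) (j := j) (k := i) (d := 1),
    Matrix.single_mul_single_same (i := j) (j := i) (k := j) (d := 1), one_mul]

lemma diag_lie_EB (d : Fin m → ℂ) (p q : Fin m) :
    ⁅(Matrix.diagonal d : glMat m), EB p q⁆ = (d p - d q) • EB p q := by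
  rw [Ring.lie_def]
  ext a b
  by_cases h1 : a = p <;> by_cases h2 : b = q <;>
    simp only [EB, Matrix.single, Matrix.diagonal_mul, Matrix.mul_diagonal,
      Matrix.sub_apply, Matrix.smul_apply, Matrix.of_apply, h1, h2, smul_eq_mul] <;>
    split_ifs <;> simp_all <;> ring

lemma EB_diag (p : Fin m) : (EB p p : glMat m) = Matrix.diagonal (Pi.single p 1) := by
  ext a b
  simp only [EB, Matrix.single, Matrix.of_apply, Matrix.diagonal_apply,
    Pi.single_apply]
  split_ifs <;> simp_all
  omega


section Mod

variable {m : ℕ} {L : Type} [AddCommGroup L] [Module ℂ L]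
  [LieRingModule (glMat m) L] [LieModule ℂ (glMat m) L]

lemma lie_sum' (X : glMat m) {ι : Type*} (S : Finset ι) (g : ι → L) :
    ⁅X, ∑ s ∈ S, g s⁆ = ∑ s ∈ S, ⁅X, g s⁆ :=
  map_sum (LieModule.toEnd ℂ (glMat m) L X) g S

lemma lie_swap {X Y : glMat m} (h : ⁅X, Y⁆ = 0) (w : L) :
    ⁅X, ⁅Y, w⁆⁆ = ⁅Y, ⁅X, w⁆⁆ := by
  rw [leibniz_lie, h, zero_lie, zero_add]

lemma wt_EB_diag {σ : Fin m → ℂ} {w : L} (hw : w ∈ glWtSp m L σ) (p : Fin m) :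
    ⁅EB p p, w⁆ = σ p • w := by
  rw [EB_diag, hw (Pi.single p 1)]
  congr 1
  simp [Pi.single_apply, ite_mul]

lemma step_scalar {D X : glMat m} {γ : ℂ} (hDX : ⁅D, X⁆ = γ • X) {w : L} {cst : ℂ}
    (hw : ⁅D, w⁆ = cst • w) : ⁅D, ⁅X, w⁆⁆ = (γ + cst) • ⁅X, w⁆ := by
  rw [leibniz_lie, hDX, smul_lie, hw, lie_smul, add_smul]

lemma wt_shift {σ : Fin m → ℂ} {w : L} (hw : w ∈ glWtSp m L σ) (p q : Fin m) :
    ⁅EB p q, w⁆ ∈ glWtSp m L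
      (fun i => σ i + (if i = p then 1 else 0) - (if i = q then 1 else 0)) := by
  intro d
  have hsum : ∑ i, d i * (σ i + (if i = p then 1 else 0) - (if i = q then 1 else 0))
      = ((d p - d q) + ∑ i, d i * σ i) := by
    simp only [mul_sub, mul_add, mul_ite, mul_one, mul_zero, Finset.sum_sub_distrib,
      Finset.sum_add_distrib, Finset.sum_ite_eq', Finset.mem_univ, if_true]
    ring
  rw [leibniz_lie, diag_lie_EB, hw d, smul_lie, lie_smul, hsum, add_smul]

lemma sl2_zero [FiniteDimensional ℂ L] (e f : glMat m) (v : L)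
    (hev : ⁅e, v⁆ = 0) (hhv : ⁅⁅e, f⁆, v⁆ = 0) (hhf : ⁅⁅e, f⁆, f⁆ = (-2 : ℂ) • f) :
    ⁅f, v⁆ = 0 := by
  set F : Module.End ℂ L := LieModule.toEnd ℂ (glMat m) L f with hF
  set w : ℕ → L := fun n => (F ^ n) v with hwdef
  have hw0 : w 0 = v := by simp [hwdef]
  have hwsucc : ∀ n, w (n + 1) = ⁅f, w n⁆ := by
    intro n
    rw [hwdef]
    simp only [pow_succ']
    rfl
  have hH : ∀ n : ℕ, ⁅⁅e, f⁆, w n⁆ = ((-2 : ℂ) * n) • w n := by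
    intro n
    induction n with
    | zero => rw [hw0, hhv]; simp
    | succ n ihn =>
      rw [hwsucc, leibniz_lie, hhf, smul_lie, ihn, lie_smul, ← hwsucc, ← add_smul]
      congr 1
      push_cast
      ring
  have hE : ∀ n : ℕ, ⁅e, w (n + 1)⁆ = (-((n : ℂ) + 1) * n) • w n := by
    intro n
    induction n with
    | zero =>
      rw [hwsucc, leibniz_lie, hw0, hhv, hev, lie_zero]
      simp
    | succ n ihn =>
      rw [hwsucc, leibniz_lie, hH (n + 1), ihn, lie_smul, ← hwsucc, ← add_smul]
      congr 1
      push_cast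
      ring
  by_contra hf1
  have hne : ∀ n : ℕ, w (n + 1) ≠ 0 := by
    intro n
    induction n with
    | zero => rw [hwsucc, hw0]; exact hf1
    | succ n ihn =>
      intro hzero
      have h1 := hE (n + 1)
      rw [hzero, lie_zero] at h1
      have h2 : (-((n : ℂ) + 1 + 1) * (n + 1)) ≠ 0 := by
        intro hc
        have : ((n : ℂ) + 1 + 1) * ((n : ℂ) + 1) = 0 := by linear_combination -hc
        rcases mul_eq_zero.1 this with h | h
        · have : ((n : ℕ) : ℂ) = -2 := by linear_combination h
          have := congrArg Complex.re this
          simp [Complex.ofReal_re] at this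
          nlinarith [this]
        · have : ((n : ℕ) : ℂ) = -1 := by linear_combination h
          have := congrArg Complex.re this
          simp at this
          nlinarith [this]
      have := (smul_eq_zero.1 h1.symm).resolve_left (by push_cast at h2 ⊢; exact h2)
      exact ihn this
  set H : Module.End ℂ L := LieModule.toEnd ℂ (glMat m) L ⁅e, f⁆ with hHdef
  have heig : ∀ n : ℕ, H.HasEigenvector ((-2 : ℂ) * (n + 1)) (w (n + 1)) := by
    intro n
    constructor
    · rw [Module.End.mem_eigenspace_iff]
      have : H (w (n + 1)) = ⁅⁅e, f⁆, w (n + 1)⁆ := rfl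
      rw [this, hH (n + 1)]
      push_cast
      ring_nf
    · exact hne n
  have hinj : Function.Injective (fun n : ℕ => (-2 : ℂ) * (n + 1)) := by
    intro a b hab
    simp only at hab
    have : ((a : ℂ)) = b := by linear_combination (-1/2 : ℂ) * hab
    exact_mod_cast this
  have li := H.eigenvectors_linearIndependent' (fun n : ℕ => (-2 : ℂ) * (n + 1)) hinj
    (fun n => w (n + 1)) heig
  have li2 := li.comp (fun i : Fin (Module.finrank ℂ L + 1) => (i : ℕ)) Fin.val_injective
  have hcard := li2.fintype_card_le_finrank
  simp [Fintype.card_fin] at hcard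

end Mod


section Key

variable {m l : ℕ} {L : Type} [AddCommGroup L] [Module ℂ L]
  [LieRingModule (glMat m) L] [LieModule ℂ (glMat m) L]

lemma lie_EBpp_EB {p a c : Fin m} (hac : a ≠ c) :
    ⁅EB p p, EB a c⁆ = (((if p = a then 1 else 0) - (if p = c then 1 else 0) : ℂ)) • EB a c := by
  by_cases h1 : p = a
  · subst h1
    rw [lie_EB_left (Ne.symm hac), if_pos rfl, if_neg hac]
    norm_num
  · by_cases h2 : p = c
    · subst h2
      rw [lie_EB_right h1, if_neg h1, if_pos rfl]
      norm_num
    · rw [lie_EB_EB h1 (fun h => h2 h.symm), if_neg h1, if_neg h2]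
      norm_num

/-- The lowering operators as endomorphisms. -/
def lowOp (b : Fin l → Fin m) (i0 : Fin m) : Fin l → Module.End ℂ L :=
  fun t => LieModule.toEnd ℂ (glMat m) L (EB (b t) i0)

lemma lowOp_apply (b : Fin l → Fin m) (i0 : Fin m) (t : Fin l) (w : L) :
    lowOp b i0 t w = ⁅EB (b t) i0, w⁆ := rfl

lemma commute_toEnd {X Y : glMat m} (h : ⁅X, Y⁆ = 0) :
    Commute (LieModule.toEnd ℂ (glMat m) L X) (LieModule.toEnd ℂ (glMat m) L Y) := by
  have h2 : ⁅LieModule.toEnd ℂ (glMat m) L X, LieModule.toEnd ℂ (glMat m) L Y⁆ = 0 := by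
    rw [← LieHom.map_lie, h, map_zero]
  rw [Ring.lie_def, sub_eq_zero] at h2
  exact h2

/-- product of commuting endomorphisms over a finset -/
def fProd (g : Fin l → Module.End ℂ L) (hg : ∀ s t, Commute (g s) (g t))
    (S : Finset (Fin l)) : Module.End ℂ L :=
  S.noncommProd g fun s _ t _ _ => hg s t

lemma fProd_empty_apply (g : Fin l → Module.End ℂ L) (hg) (w : L) :
    fProd g hg ∅ w = w := by
  simp only [fProd, Finset.noncommProd_empty]
  rfl

lemma fProd_insert_apply (g : Fin l → Module.End ℂ L) (hg) {t : Fin l} {S : Finset (Fin l)}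
    (h : t ∉ S) (w : L) :
    fProd g hg (insert t S) w = g t (fProd g hg S w) := by
  exact congrArg (fun F : Module.End ℂ L => F w)
    (Finset.noncommProd_insert_of_notMem S t g (fun s _ t _ _ => hg s t) h)

lemma fProd_erase_apply (g : Fin l → Module.End ℂ L) (hg) {t : Fin l} {S : Finset (Fin l)}
    (h : t ∈ S) (w : L) :
    fProd g hg S w = g t (fProd g hg (S.erase t) w) := by
  conv_lhs => rw [← Finset.insert_erase h]
  exact fProd_insert_apply g hg (Finset.notMem_erase t S) w

variable {i0 i1 : Fin m} {b : Fin l → Fin m} {ν : Fin m → ℂ} {v : L}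
  (hc : ∀ s t, Commute (lowOp (L := L) b i0 s) (lowOp b i0 t))

lemma diag_fP (hwt : v ∈ glWtSp m L ν) (hb0 : ∀ t, b t ≠ i0) (p : Fin m) :
    ∀ S : Finset (Fin l),
      ⁅EB p p, fProd (lowOp b i0) hc S v⁆ =
        ((ν p + ∑ t ∈ S, ((if p = b t then 1 else 0) - (if p = i0 then 1 else 0))) : ℂ) •
          fProd (lowOp b i0) hc S v := by
  intro S
  induction S using Finset.induction_on with
  | empty => rw [fProd_empty_apply, wt_EB_diag hwt p]; simp
  | @insert t S ht ih =>
    rw [fProd_insert_apply _ _ ht, lowOp_apply,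
      step_scalar (lie_EBpp_EB (hb0 t)) ih, Finset.sum_insert ht]
    congr 1
    ring

lemma z1_fP (hk4 : ∀ s t, s ≠ t → ⁅EB (b s) (b t), v⁆ = 0)
    (hbinj : Function.Injective b) (hb0 : ∀ t, b t ≠ i0) :
    ∀ (S : Finset (Fin l)) (s t : Fin l), s ≠ t → t ∉ S →
      ⁅EB (b s) (b t), fProd (lowOp b i0) hc S v⁆ = 0 := by
  intro S
  induction S using Finset.induction_on with
  | empty => intro s t hst _; rw [fProd_empty_apply]; exact hk4 s t hst
  | @insert u S hu ih =>
    intro s t hst htm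
    have htu : t ≠ u := fun h => htm (h ▸ Finset.mem_insert_self u S)
    rw [fProd_insert_apply _ _ hu, lowOp_apply, leibniz_lie,
      lie_EB_EB (fun h => htu (hbinj h)) (Ne.symm (hb0 s)), zero_lie,
      ih s t hst (fun h => htm (Finset.mem_insert_of_mem h)), lie_zero, add_zero]

lemma peel0_fP (hk1 : ∀ t, ⁅EB i0 (b t), v⁆ = 0)
    (hk4 : ∀ s t, s ≠ t → ⁅EB (b s) (b t), v⁆ = 0)
    (hbinj : Function.Injective b) (hb0 : ∀ t, b t ≠ i0) :
    ∀ (S : Finset (Fin l)) (t : Fin l), t ∉ S →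
      ⁅EB i0 (b t), fProd (lowOp b i0) hc S v⁆ = 0 := by
  intro S
  induction S using Finset.induction_on with
  | empty => intro t _; rw [fProd_empty_apply]; exact hk1 t
  | @insert u S hu ih =>
    intro t htm
    have htu : t ≠ u := fun h => htm (h ▸ Finset.mem_insert_self u S)
    rw [fProd_insert_apply _ _ hu, lowOp_apply, leibniz_lie,
      lie_EB_right (fun h => htu (hbinj h)), neg_lie,
      z1_fP hc hk4 hbinj hb0 S u t (Ne.symm htu) (fun h => htm (Finset.mem_insert_of_mem h)),
      ih t (fun h => htm (Finset.mem_insert_of_mem h)), lie_zero, neg_zero, add_zero]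

lemma peel1_fP (hwt : v ∈ glWtSp m L ν)
    (hk1 : ∀ t, ⁅EB i0 (b t), v⁆ = 0)
    (hk4 : ∀ s t, s ≠ t → ⁅EB (b s) (b t), v⁆ = 0)
    (hbinj : Function.Injective b) (hb0 : ∀ t, b t ≠ i0) (hν0 : ∀ t, ν (b t) = 0)
    (S : Finset (Fin l)) (t : Fin l) (ht : t ∈ S) :
    ⁅EB i0 (b t), fProd (lowOp b i0) hc S v⁆ =
      (ν i0 + 1 - (S.card : ℂ)) • fProd (lowOp b i0) hc (S.erase t) v := by
  rw [fProd_erase_apply _ _ ht, lowOp_apply, leibniz_lie, lie_EB_same,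
    peel0_fP hc hk1 hk4 hbinj hb0 _ t (Finset.notMem_erase t S), lie_zero, add_zero, sub_lie,
    diag_fP hc hwt hb0 i0, diag_fP hc hwt hb0 (b t)]
  have hs1 : ∑ u ∈ S.erase t, ((if i0 = b u then (1 : ℂ) else 0) - (if i0 = i0 then 1 else 0))
      = -(((S.erase t).card : ℂ)) := by
    have h1 : ∀ u ∈ S.erase t,
        ((if i0 = b u then (1 : ℂ) else 0) - (if i0 = i0 then 1 else 0)) = -1 := by
      intro u _
      rw [if_neg (fun h => hb0 u h.symm), if_pos rfl]
      ring
    rw [Finset.sum_congr rfl h1, Finset.sum_const, nsmul_eq_mul]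
    ring
  have hs2 : ∑ u ∈ S.erase t, ((if b t = b u then (1 : ℂ) else 0) - (if b t = i0 then 1 else 0))
      = 0 := by
    apply Finset.sum_eq_zero
    intro u hu
    rw [if_neg (fun h => (Finset.mem_erase.1 hu).1 (hbinj h).symm), if_neg (hb0 t)]
    ring
  rw [hs1, hs2, hν0 t, Finset.card_erase_of_mem ht,
    Nat.cast_sub (Finset.one_le_card.2 ⟨t, ht⟩)]
  rw [← sub_smul]
  congr 1
  push_cast
  ring

lemma q0_fP (hwt : v ∈ glWtSp m L ν)
    (hk3 : ⁅EB i0 i1, v⁆ = 0)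
    (hb0 : ∀ t, b t ≠ i0) (hb1 : ∀ t, b t ≠ i1) :
    ∀ S : Finset (Fin l),
      ⁅EB i0 i1, fProd (lowOp b i0) hc S v⁆ =
        -∑ s ∈ S, ⁅EB (b s) i1, fProd (lowOp b i0) hc (S.erase s) v⁆ := by
  intro S
  induction S using Finset.induction_on with
  | empty => rw [fProd_empty_apply]; simp [hk3]
  | @insert u S hu ih =>
    rw [fProd_insert_apply _ _ hu, lowOp_apply, leibniz_lie,
      lie_EB_right (Ne.symm (hb1 u)), neg_lie, ih, lie_neg, lie_sum']
    have hterm : ∀ s ∈ S,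
        ⁅EB (b u) i0, ⁅EB (b s) i1, fProd (lowOp b i0) hc (S.erase s) v⁆⁆ =
          ⁅EB (b s) i1, fProd (lowOp b i0) hc ((insert u S).erase s) v⁆ := by
      intro s hs
      have hsu : u ≠ s := fun h => hu (h ▸ hs)
      rw [lie_swap (lie_EB_EB (Ne.symm (hb0 s)) (Ne.symm (hb1 u))),
        ← lowOp_apply b i0 u, ← fProd_insert_apply (lowOp b i0) hc
          (fun h => hu (Finset.mem_of_mem_erase h)) v,
        Finset.erase_insert_of_ne hsu]
    rw [Finset.sum_congr rfl hterm, Finset.sum_insert hu, Finset.erase_insert hu]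
    abel

lemma base_ne_zero (hv : v ≠ 0) (hwt : v ∈ glWtSp m L ν)
    (hν0 : ∀ t, ν (b t) = 0) (hν1 : ν i1 ≠ 0)
    (hk2 : ∀ t, ⁅EB i1 (b t), v⁆ = 0) (j : Fin l) :
    ⁅EB (b j) i1, v⁆ ≠ 0 := by
  intro h0
  have h1 : ⁅EB i1 (b j), ⁅EB (b j) i1, v⁆⁆ = 0 := by rw [h0, lie_zero]
  rw [leibniz_lie, hk2 j, lie_zero, add_zero, lie_EB_same, sub_lie, wt_EB_diag hwt,
    wt_EB_diag hwt, hν0 j, zero_smul, sub_zero] at h1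
  exact hν1 ((smul_eq_zero.1 h1).resolve_right hv)

lemma key_indep (hv : v ≠ 0) (hwt : v ∈ glWtSp m L ν)
    (hbinj : Function.Injective b) (h01 : i0 ≠ i1)
    (hb0 : ∀ t, b t ≠ i0) (hb1 : ∀ t, b t ≠ i1)
    (hν0 : ∀ t, ν (b t) = 0) (hν1 : ν i1 ≠ 0)
    (N : ℕ) (hνi0 : ν i0 = (N : ℂ))
    (hk1 : ∀ t, ⁅EB i0 (b t), v⁆ = 0)
    (hk2 : ∀ t, ⁅EB i1 (b t), v⁆ = 0)
    (hk3 : ⁅EB i0 i1, v⁆ = 0)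
    (hk4 : ∀ s t, s ≠ t → ⁅EB (b s) (b t), v⁆ = 0) :
    ∀ (n : ℕ) (T : Finset (Fin l)), T.card = n → n ≤ N → ∀ c : Fin l → ℂ,
      ∑ j ∈ T, c j • ⁅EB (b j) i1, fProd (lowOp b i0) hc (T.erase j) v⁆ = 0 →
      ∀ j ∈ T, c j = 0 := by
  intro n
  induction n with
  | zero =>
    intro T hT _ c _ j hj
    rw [Finset.card_eq_zero] at hT
    subst hT
    exact absurd hj (Finset.notMem_empty j)
  | succ n ih =>
    intro T hT hN c hsum j hj
    by_cases hn : n = 0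
    · subst hn
      obtain ⟨j0, rfl⟩ := Finset.card_eq_one.1 hT
      rw [Finset.mem_singleton] at hj
      subst hj
      rw [Finset.sum_singleton, Finset.erase_singleton, fProd_empty_apply] at hsum
      exact (smul_eq_zero.1 hsum).resolve_right
        (base_ne_zero hv hwt hν0 hν1 hk2 j)
    · -- the inductive step
      set β : ℂ := ν i0 + 1 - (n : ℂ) with hβ
      have hstep : ∀ t ∈ T, ∀ u ∈ T.erase t, β * c u - c t = 0 := by
        intro t ht
        have h0 := congrArg (fun w => ⁅EB i0 (b t), w⁆) hsum
        simp only [lie_zero] at h0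
        rw [lie_sum'] at h0
        have hterm : ∀ j' ∈ T,
            ⁅EB i0 (b t), c j' • ⁅EB (b j') i1, fProd (lowOp b i0) hc (T.erase j') v⁆⁆ =
              if j' = t then
                ∑ s ∈ T.erase t,
                  (-(c t)) • ⁅EB (b s) i1, fProd (lowOp b i0) hc ((T.erase t).erase s) v⁆
              else (β * c j') •
                ⁅EB (b j') i1, fProd (lowOp b i0) hc ((T.erase t).erase j') v⁆ := by
          intro j' hj'
          rw [lie_smul]
          by_cases hjt : j' = t
          · subst hjt
            rw [if_pos rfl, leibniz_lie, lie_EB_left (Ne.symm h01),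
              peel0_fP hc hk1 hk4 hbinj hb0 _ j' (Finset.notMem_erase j' T), lie_zero,
              add_zero, q0_fP hc hwt hk3 hb0 hb1, smul_neg, Finset.smul_sum,
              ← Finset.sum_neg_distrib]
            apply Finset.sum_congr rfl
            intro s _
            rw [neg_smul]
          · rw [if_neg hjt, leibniz_lie,
              lie_EB_EB (fun h => hjt (hbinj h).symm) (Ne.symm h01), zero_lie, zero_add,
              peel1_fP hc hwt hk1 hk4 hbinj hb0 hν0 _ t
                (Finset.mem_erase.2 ⟨fun h => hjt h.symm, ht⟩),
              lie_smul, smul_smul, Finset.erase_right_comm,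
              Finset.card_erase_of_mem hj', hT]
            simp only [Nat.add_sub_cancel]
            congr 1
            rw [hβ]
            ring
        rw [Finset.sum_congr rfl hterm, ← Finset.sum_erase_add _ _ ht, if_pos rfl] at h0
        have hsplit : ∑ j' ∈ T.erase t,
            (if j' = t then
                ∑ s ∈ T.erase t,
                  (-(c t)) • ⁅EB (b s) i1, fProd (lowOp b i0) hc ((T.erase t).erase s) v⁆
              else (β * c j') •
                ⁅EB (b j') i1, fProd (lowOp b i0) hc ((T.erase t).erase j') v⁆)
            = ∑ j' ∈ T.erase t, (β * c j') •
                ⁅EB (b j') i1, fProd (lowOp b i0) hc ((T.erase t).erase j') v⁆ := by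
          apply Finset.sum_congr rfl
          intro j' hj'
          rw [if_neg (Finset.mem_erase.1 hj').1]
        rw [hsplit, ← Finset.sum_add_distrib] at h0
        have h0' : ∑ j' ∈ T.erase t, (β * c j' - c t) •
            ⁅EB (b j') i1, fProd (lowOp b i0) hc ((T.erase t).erase j') v⁆ = 0 := by
          rw [← h0]
          apply Finset.sum_congr rfl
          intro j' _
          rw [sub_smul, neg_smul]
          abel
        exact ih (T.erase t) (by rw [Finset.card_erase_of_mem ht, hT]; omega)
          (by omega) _ h0'
      obtain ⟨u, hu, hut⟩ := Finset.exists_mem_ne (by omega : 1 < T.card) j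
      have h1 := hstep j hj u (Finset.mem_erase.2 ⟨hut, hu⟩)
      have h2 := hstep u hu j (Finset.mem_erase.2 ⟨fun h => hut h.symm, hj⟩)
      have h3 : (β * β - 1) * c j = 0 := by linear_combination β * h2 + h1
      have hβval : β = ((N + 1 - n : ℕ) : ℂ) := by
        rw [hβ, hνi0, Nat.cast_sub (by omega)]
        push_cast
        ring
      have hβne : β * β - 1 ≠ 0 := by
        rw [hβval, ← Nat.cast_mul]
        intro hzero
        have h4 : (((N + 1 - n) * (N + 1 - n) : ℕ) : ℂ) = ((1 : ℕ) : ℂ) := by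
          rw [Nat.cast_one]
          linear_combination hzero
        have h5 := Nat.cast_injective (R := ℂ) h4
        have h6 : 2 ≤ N + 1 - n := by omega
        nlinarith [h5, h6]
      exact (mul_eq_zero.1 h3).resolve_left hβne

lemma wt_fP (hwt : v ∈ glWtSp m L ν) :
    ∀ S : Finset (Fin l),
      fProd (lowOp b i0) hc S v ∈ glWtSp m L
        (fun i => ν i + ∑ t ∈ S, ((if i = b t then 1 else 0) - (if i = i0 then 1 else 0))) := by
  intro S
  induction S using Finset.induction_on with
  | empty =>
    have h1 : (fun i => ν i + ∑ t ∈ (∅ : Finset (Fin l)),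
        ((if i = b t then (1 : ℂ) else 0) - (if i = i0 then 1 else 0))) = ν := by
      funext i
      simp
    rw [h1]
    intro d
    rw [fProd_empty_apply]
    exact hwt d
  | @insert t S ht ih =>
    have h2 := wt_shift ih (b t) i0
    have h3 : (fun i => (ν i + ∑ u ∈ S, ((if i = b u then (1 : ℂ) else 0) -
          (if i = i0 then 1 else 0))) + (if i = b t then 1 else 0) - (if i = i0 then 1 else 0))
        = (fun i => ν i + ∑ u ∈ insert t S,
            ((if i = b u then (1 : ℂ) else 0) - (if i = i0 then 1 else 0))) := by
      funext i
      rw [Finset.sum_insert ht]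
      ring
    rw [h3] at h2
    intro d
    rw [fProd_insert_apply _ _ ht, lowOp_apply]
    exact h2 d

end Key

end DegAux


set_option maxHeartbeats 8000000 in
open DegAux in
/-- let `k ≥ 2` and let `(λ₁,…,λ_k)` be a dominant integral `gl(k)`-weight
with `λ₁ ≥ 2` and `λ_k > 0`.  Then for every positive integer `ℓ`,
`d((λ₁,…,λ_k,0^{(ℓ)})) ≥ min {λ₁, ℓ}`. -/
theorem deg_padded_partition (k : ℕ) (hk : 2 ≤ k) (lam : Fin k → ℤ)
    (hdom : ∀ i j : Fin k, i ≤ j → lam j ≤ lam i)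
    (hpos : ∀ (h : 0 < k), 2 ≤ lam ⟨0, h⟩ ∧ 0 < lam ⟨k - 1, by omega⟩)
    (l : ℕ) (hl : 0 < l)
    (L : Type) [AddCommGroup L] [Module ℂ L] [LieRingModule (glMat (k + l)) L]
    [LieModule ℂ (glMat (k + l)) L]
    (hL : IsSimpleFDHW (k + l) L
      (fun i => if h : (i : ℕ) < k then (lam ⟨(i : ℕ), h⟩ : ℂ) else 0)) :
    min (lam ⟨0, by omega⟩) (l : ℤ) ≤ (maxMult (k + l) L : ℤ) := by
  classical
  have h0k : 0 < k := by omega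
  set ν : Fin (k + l) → ℂ :=
    (fun i => if h : (i : ℕ) < k then (lam ⟨(i : ℕ), h⟩ : ℂ) else 0) with hνdef
  obtain ⟨hirr, hfd, v, hv, hmem, hhw⟩ := hL
  haveI : FiniteDimensional ℂ L := hfd
  set i0 : Fin (k + l) := ⟨0, by omega⟩ with hi0
  set i1 : Fin (k + l) := ⟨k - 1, by omega⟩ with hi1
  set b : Fin l → Fin (k + l) := fun t => ⟨k + (t : ℕ), by omega⟩ with hb
  have hbinj : Function.Injective b := by
    intro s t h
    have h2 := congrArg Fin.val h
    simp only [hb] at h2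
    exact Fin.ext (by omega)
  have h01 : i0 ≠ i1 := by
    intro h
    have := congrArg Fin.val h
    simp only [hi0, hi1] at this
    omega
  have hb0 : ∀ t, b t ≠ i0 := by
    intro t h
    have := congrArg Fin.val h
    simp only [hb, hi0] at this
    omega
  have hb1 : ∀ t, b t ≠ i1 := by
    intro t h
    have := congrArg Fin.val h
    simp only [hb, hi1] at this
    omega
  have hν0 : ∀ t, ν (b t) = 0 := by
    intro t
    simp only [hνdef, hb]
    rw [dif_neg (by omega)]
  have hν1 : ν i1 ≠ 0 := by
    simp only [hνdef, hi1]
    rw [dif_pos (by omega : k - 1 < k)]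
    have h2 : 0 < lam ⟨k - 1, by omega⟩ := (hpos h0k).2
    exact_mod_cast Int.cast_ne_zero.mpr (by omega)
  have hlam0 : 2 ≤ lam ⟨0, h0k⟩ := (hpos h0k).1
  set N : ℕ := (lam ⟨0, h0k⟩).toNat with hN
  have hνi0 : ν i0 = (N : ℂ) := by
    simp only [hνdef, hi0]
    rw [dif_pos h0k]
    have h2 : ((N : ℕ) : ℤ) = lam ⟨0, h0k⟩ := Int.toNat_of_nonneg (by omega)
    exact_mod_cast congrArg (fun z : ℤ => (z : ℂ)) h2.symm
  have hk1 : ∀ t, ⁅EB i0 (b t), v⁆ = 0 := by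
    intro t
    exact hhw i0 (b t) (by simp only [Fin.lt_def, hi0, hb]; omega)
  have hk2 : ∀ t, ⁅EB i1 (b t), v⁆ = 0 := by
    intro t
    exact hhw i1 (b t) (by simp only [Fin.lt_def, hi1, hb]; omega)
  have hk3 : ⁅EB i0 i1, v⁆ = 0 :=
    hhw i0 i1 (by simp only [Fin.lt_def, hi0, hi1]; omega)
  have hk4 : ∀ s t, s ≠ t → ⁅EB (b s) (b t), v⁆ = 0 := by
    intro s t hst
    rcases lt_or_gt_of_ne hst with h | h
    · exact hhw (b s) (b t) (by simp only [Fin.lt_def, hb]; omega)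
    · -- t < s, lowering operator: use sl2
      have hbts : b t ≠ b s := fun hh => hst.symm (hbinj hh)
      apply sl2_zero (EB (b t) (b s)) (EB (b s) (b t)) v
      · exact hhw (b t) (b s) (by simp only [Fin.lt_def, hb]; omega)
      · rw [lie_EB_same, sub_lie, wt_EB_diag hmem, wt_EB_diag hmem, hν0 t, hν0 s,
          zero_smul, sub_zero]
      · rw [lie_EB_same, sub_lie, lie_EBpp_EB (Ne.symm hbts), lie_EBpp_EB (Ne.symm hbts),
          if_neg hbts, if_pos rfl, if_pos rfl, if_neg (fun hh => hbts hh.symm), ← sub_smul]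
        norm_num
  have hc : ∀ s t, Commute (lowOp (L := L) b i0 s) (lowOp b i0 t) := fun s t =>
    commute_toEnd (lie_EB_EB (Ne.symm (hb0 t)) (Ne.symm (hb0 s)))
  set r : ℕ := min N l with hr
  set T : Finset (Fin l) := (Finset.range r).attachFin
    (fun x hx => by rw [Finset.mem_range] at hx; omega) with hT
  have hTcard : T.card = r := by
    rw [hT, Finset.card_attachFin, Finset.card_range]
  -- the common weight of the vectors x_j
  set μ : Fin (k + l) → ℂ := fun i => ν i +
      ((∑ t ∈ T, ((if i = b t then (1 : ℂ) else 0) - (if i = i0 then 1 else 0))) +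
        (if i = i0 then 1 else 0) - (if i = i1 then 1 else 0)) with hμ
  have hmemb : ∀ j ∈ T, ⁅EB (b j) i1, fProd (lowOp b i0) hc (T.erase j) v⁆ ∈
      glWtSp (k + l) L μ := by
    intro j hj
    have h2 := wt_shift (wt_fP hc hmem (T.erase j)) (b j) i1
    have h3 : (fun i => (ν i + ∑ t ∈ T.erase j,
          ((if i = b t then (1 : ℂ) else 0) - (if i = i0 then 1 else 0)))
        + (if i = b j then 1 else 0) - (if i = i1 then 1 else 0)) = μ := by
      funext i
      have h4 := Finset.sum_erase_add T
        (fun t => ((if i = b t then (1 : ℂ) else 0) - (if i = i0 then 1 else 0))) hj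
      rw [hμ]
      simp only
      rw [← h4]
      ring
    rw [h3] at h2
    exact h2
  -- the subtype family
  set W : Submodule ℂ L := glWtSp (k + l) L μ with hW
  set y : {a // a ∈ T} → W := fun a =>
    ⟨⁅EB (b a.1) i1, fProd (lowOp b i0) hc (T.erase a.1) v⁆, hmemb a.1 a.2⟩ with hy
  have li : LinearIndependent ℂ y := by
    rw [Fintype.linearIndependent_iff]
    intro c' hc'
    have hL0 : ∑ a : {a // a ∈ T},
        c' a • ⁅EB (b a.1) i1, fProd (lowOp b i0) hc (T.erase a.1) v⁆ = 0 := by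
      have h5 := congrArg (Subtype.val : W → L) hc'
      rw [hy] at h5
      simpa using h5
    set cfun : Fin l → ℂ := fun j => if hj : j ∈ T then c' ⟨j, hj⟩ else 0 with hcfun
    have hsum2 : ∑ jj ∈ T, cfun jj •
        ⁅EB (b jj) i1, fProd (lowOp b i0) hc (T.erase jj) v⁆ = 0 := by
      rw [← Finset.sum_attach T (fun jj => cfun jj •
        ⁅EB (b jj) i1, fProd (lowOp b i0) hc (T.erase jj) v⁆)]
      rw [Finset.univ_eq_attach] at hL0
      rw [← hL0]
      apply Finset.sum_congr rfl
      intro a _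
      rw [hcfun]
      simp only
      rw [dif_pos a.2]
    intro i
    have h6 := key_indep hc hv hmem hbinj h01 hb0 hb1 hν0 hν1 N hνi0 hk1 hk2 hk3 hk4
      r T hTcard (min_le_left _ _) cfun hsum2 i.1 i.2
    rw [hcfun] at h6
    simp only at h6
    rw [dif_pos i.2] at h6
    exact h6
  have hrW : r ≤ Module.finrank ℂ W := by
    have h7 := li.fintype_card_le_finrank
    rwa [Fintype.card_coe, hTcard] at h7
  have hWmax : Module.finrank ℂ W ≤ maxMult (k + l) L := by
    apply le_csSup
    · exact ⟨Module.finrank ℂ L, by rintro d ⟨lam', rfl⟩; exact Submodule.finrank_le _⟩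
    · exact ⟨μ, rfl⟩
  have hfin : (r : ℤ) ≤ (maxMult (k + l) L : ℤ) := by exact_mod_cast le_trans hrW hWmax
  have heq : lam ⟨0, by omega⟩ = lam ⟨0, h0k⟩ := rfl
  rw [heq]
  have hrval : (r : ℕ) = min N l := hr
  omega


end
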